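/- Let Q be an even lattice, ε : Q × Q → {±1} a bimultiplicative function satisfying ε(α, α) = (−1)^{|α|²(|α|²+1)/2} for all α ∈ Q, and σ an automorphism of Q of finite order preserving the bilinear form, i.e., (σα|σβ) = (α|β) for all α, β ∈ Q. Then there exists a function η : Q → {±1} such that η(α) η(β) ε(α, β) = η(α+β) ε(σα, σβ) for all α, β ∈ Q, and moreover η can be chosen so that η(α) = 1 whenever σα = α. -/

import Mathlib

private theorem quad_refine {P : Type*} [AddCommGroup P] [Module ℤ P]
    [Module.Free ℤ P] [Module.Finite ℤ P]
    (g : P → P → ℤˣ)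
    (h1 : ∀ x y z : P, g (x + y) z = g x z * g y z)
    (h2 : ∀ x y z : P, g x (y + z) = g x y * g x z)
    (hd : ∀ x : P, g x x = 1) :
    ∃ t : P → ℤˣ, t 0 = 1 ∧ ∀ x y : P, t (x + y) = t x * t y * g x y := by
  classical
  -- symmetry
  have hsym : ∀ x y : P, g y x = g x y := by
    intro x y
    have h : (1 : ℤˣ) = g x y * g y x := by
      have h := hd (x + y)
      rw [h1, h2, h2, hd, hd, one_mul, mul_one] at h
      exact h.symm
    have h' : g x y * g x y = 1 := Int.units_mul_self _
    exact mul_left_cancel (h.symm.trans h'.symm)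
  have hzero1 : ∀ y : P, g 0 y = 1 := by
    intro y
    have h := h1 0 0 y
    rw [add_zero] at h
    exact (mul_left_cancel (a := g 0 y) (by rw [mul_one, ← h])).symm
  have hzero2 : ∀ x : P, g x 0 = 1 := fun x => (hsym 0 x).trans (hzero1 x)
  -- basis
  set b := (Module.Free.chooseBasis ℤ P).reindex
      (Fintype.equivFin (Module.Free.ChooseBasisIndex ℤ P)) with hb
  set n := Fintype.card (Module.Free.ChooseBasisIndex ℤ P)
  set c : P → Fin n → ℤ := fun x i => b.repr x i with hc
  have hcadd : ∀ (x y : P) (i : Fin n), c (x + y) i = c x i + c y i := by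
    intro x y i; simp [hc]
  have hpow1 : ∀ (m : ℤ) (x y : P), g (m • x) y = g x y ^ m := by
    intro m
    induction m using Int.induction_on with
    | zero => intro x y; rw [zero_smul, hzero1, zpow_zero]
    | succ k ih => intro x y
                   rw [add_zsmul, one_zsmul, h1, ih, zpow_add, zpow_one]
    | pred k ih => intro x y
                   have hneg : ∀ x y : P, g (-x) y = (g x y)⁻¹ := by
                     intro x y
                     have h := h1 x (-x) y
                     rw [add_neg_cancel, hzero1] at h
                     exact (inv_eq_of_mul_eq_one_right h.symm).symm
                   rw [sub_zsmul, one_zsmul, h1, ih, hneg, zpow_sub, zpow_one]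
  have expand1 : ∀ (x y : P), g x y = ∏ i, g (b i) y ^ (c x i) := by
    intro x y
    have hx : ∑ i, c x i • b i = x := by
      refine Eq.trans ?_ (b.sum_repr x)
      exact Finset.sum_congr rfl fun i _ => (int_smul_eq_zsmul inferInstance _ _).symm
    have hps : ∀ (s : Finset (Fin n)) (co : Fin n → ℤ),
        g (∑ i ∈ s, co i • b i) y = ∏ i ∈ s, g (b i) y ^ co i := by
      intro s co
      induction s using Finset.induction with
      | empty => simpa using hzero1 y
      | @insert a s hni ih =>
          rw [Finset.sum_insert hni, h1, ih, Finset.prod_insert hni, hpow1]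
    conv_lhs => rw [← hx]
    exact hps Finset.univ _
  have expand2 : ∀ (x y : P), g x y = ∏ j, g x (b j) ^ (c y j) := by
    intro x y
    rw [← hsym x y, expand1 y x]
    exact Finset.prod_congr rfl fun j _ => by rw [hsym]
  have expand : ∀ (x y : P), g x y
      = ∏ p ∈ (Finset.univ : Finset (Fin n × Fin n)),
          g (b p.1) (b p.2) ^ (c x p.1 * c y p.2) := by
    intro x y
    rw [← Finset.univ_product_univ, Finset.prod_product]
    rw [expand1 x y]
    refine Finset.prod_congr rfl fun i _ => ?_
    rw [expand2 (b i) y, ← Finset.prod_zpow]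
    refine Finset.prod_congr rfl fun j _ => ?_
    rw [← zpow_mul, mul_comm (c y j)]
  set S : Finset (Fin n × Fin n) := Finset.univ.filter (fun p => p.1 < p.2) with hS
  have hcross : ∀ (x y : P), g x y
      = ∏ p ∈ S, g (b p.1) (b p.2) ^ (c x p.1 * c y p.2 + c x p.2 * c y p.1) := by
    intro x y
    have h0 := (Finset.prod_filter_mul_prod_filter_not
      (Finset.univ : Finset (Fin n × Fin n)) (fun p => p.1 < p.2)
      (fun p => g (b p.1) (b p.2) ^ (c x p.1 * c y p.2))).symm
    have h1' := (Finset.prod_filter_mul_prod_filter_not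
      ((Finset.univ : Finset (Fin n × Fin n)).filter (fun p => ¬ p.1 < p.2))
      (fun p => p.2 < p.1)
      (fun p => g (b p.1) (b p.2) ^ (c x p.1 * c y p.2))).symm
    -- the doubly-not part is the diagonal, product 1
    have hdiagone : ∏ p ∈ ((Finset.univ : Finset (Fin n × Fin n)).filter
        (fun p => ¬ p.1 < p.2)).filter (fun p => ¬ p.2 < p.1),
        g (b p.1) (b p.2) ^ (c x p.1 * c y p.2) = 1 := by
      refine Finset.prod_eq_one fun p hp => ?_
      simp only [Finset.mem_filter] at hp
      have : p.1 = p.2 := le_antisymm (not_lt.mp hp.2) (not_lt.mp hp.1.2)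
      rw [← this, hd, one_zpow]
    -- reindex the lower-triangular part
    have hlow : ∏ p ∈ ((Finset.univ : Finset (Fin n × Fin n)).filter
        (fun p => ¬ p.1 < p.2)).filter (fun p => p.2 < p.1),
        g (b p.1) (b p.2) ^ (c x p.1 * c y p.2)
        = ∏ p ∈ S, g (b p.1) (b p.2) ^ (c x p.2 * c y p.1) := by
      refine Finset.prod_bij' (fun p _ => p.swap) (fun p _ => p.swap) ?_ ?_ ?_ ?_ ?_
      · intro p hp
        simp only [Finset.mem_filter] at hp
        simp [hS, hp.2]
      · intro p hp
        simp only [hS, Finset.mem_filter] at hp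
        simp [hp.2, le_of_lt hp.2]
      · intro p _; rfl
      · intro p _; rfl
      · intro p _
        rw [hsym]
        rfl
    rw [expand x y, h0, h1', hdiagone, mul_one, hlow, ← Finset.prod_mul_distrib]
    refine Finset.prod_congr rfl fun p _ => ?_
    rw [← zpow_add]
  refine ⟨fun x => ∏ p ∈ S, g (b p.1) (b p.2) ^ (c x p.1 * c x p.2), ?_, ?_⟩
  · refine Finset.prod_eq_one fun p _ => ?_
    have : c 0 p.1 = 0 := by simp [hc]
    rw [this, zero_mul, zpow_zero]
  · intro x y
    have hsplitexp : ∀ p ∈ S, g (b p.1) (b p.2) ^ (c (x + y) p.1 * c (x + y) p.2)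
        = g (b p.1) (b p.2) ^ (c x p.1 * c x p.2)
          * g (b p.1) (b p.2) ^ (c y p.1 * c y p.2)
          * g (b p.1) (b p.2) ^ (c x p.1 * c y p.2 + c x p.2 * c y p.1) := by
      intro p _
      rw [hcadd, hcadd, ← zpow_add, ← zpow_add]
      congr 1
      ring
    dsimp only
    rw [Finset.prod_congr rfl hsplitexp, Finset.prod_mul_distrib,
      Finset.prod_mul_distrib, ← hcross]

/-- for an even lattice `Q`, a bimultiplicative `ε` with
`ε(α,α) = (−1)^{|α|²(|α|²+1)/2}`, and a finite-order automorphism `σ` of `Q`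
preserving the bilinear form, there exists `η : Q → {±1}` with
`η(α) η(β) ε(α,β) = η(α+β) ε(σα,σβ)`, which moreover satisfies `η(α) = 1`
whenever `σα = α`. -/
theorem exists_eta
    (Q : Type*) [AddCommGroup Q] [Module.Free ℤ Q] [Module.Finite ℤ Q]
    (B : Q →ₗ[ℤ] Q →ₗ[ℤ] ℤ)
    (hsymm : ∀ α β : Q, B α β = B β α)
    (heven : ∀ α : Q, 2 ∣ B α α)
    (ε : Q → Q → ℤˣ)
    (hb1 : ∀ α β γ : Q, ε (α + β) γ = ε α γ * ε β γ)
    (hb2 : ∀ α β γ : Q, ε α (β + γ) = ε α β * ε α γ)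
    (hdiag : ∀ α : Q, ε α α = (-1 : ℤˣ) ^ (B α α * (B α α + 1) / 2))
    (σ : AddAut Q) (N : ℕ) (hN : 0 < N) (hord : N • σ = 0)
    (hform : ∀ α β : Q, B (σ α) (σ β) = B α β) :
    ∃ η : Q → ℤˣ,
      (∀ α β : Q, η α * η β * ε α β = η (α + β) * ε (σ α) (σ β)) ∧
      (∀ α : Q, σ α = α → η α = 1) := by
  classical
  -- the twisted 2-cocycle ratio
  set f : Q → Q → ℤˣ := fun α β => ε (σ α) (σ β) * ε α β with hf
  have hcancel : ∀ u v : ℤˣ, u * (u * v) = v := fun u v => by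
    rw [← mul_assoc, Int.units_mul_self, one_mul]
  have hff : ∀ α β : Q, f α β * ε α β = ε (σ α) (σ β) := by
    intro α β
    rw [hf]; dsimp only
    rw [mul_assoc, Int.units_mul_self, mul_one]
  have f1 : ∀ α β γ : Q, f (α + β) γ = f α γ * f β γ := by
    intro α β γ
    simp only [hf, map_add, hb1]
    simp [mul_comm, mul_left_comm, mul_assoc]
  have f2 : ∀ α β γ : Q, f α (β + γ) = f α β * f α γ := by
    intro α β γ
    simp only [hf, map_add, hb2]
    simp [mul_comm, mul_left_comm, mul_assoc]
  have fd : ∀ α : Q, f α α = 1 := by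
    intro α
    have : ε (σ α) (σ α) = ε α α := by rw [hdiag, hdiag, hform]
    rw [hf]; dsimp only
    rw [this, Int.units_mul_self]
  have fsym : ∀ α β : Q, f β α = f α β := by
    intro α β
    have h : (1 : ℤˣ) = f α β * f β α := by
      have h := fd (α + β)
      rw [f1, f2, f2, fd, fd, one_mul, mul_one] at h
      exact h.symm
    have h' : f α β * f α β = 1 := Int.units_mul_self _
    exact mul_left_cancel (h.symm.trans h'.symm)
  have fzero2 : ∀ α : Q, f α 0 = 1 := by
    intro α
    have h := f2 α 0 0
    rw [add_zero] at h
    exact (mul_left_cancel (a := f α 0) (by rw [mul_one, ← h])).symm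
  -- f is trivial on pairs of fixed vectors
  have fF : ∀ a b : Q, σ a = a → σ b = b → f a b = 1 := by
    intro a b ha hb
    rw [hf]; dsimp only
    rw [ha, hb, Int.units_mul_self]
  -- the fixed-point submodule
  set τ : Q →ₗ[ℤ] Q := σ.toAddMonoidHom.toIntLinearMap with hτ
  set F : Submodule ℤ Q := LinearMap.ker (τ - LinearMap.id) with hF
  have hmemF : ∀ a : Q, a ∈ F ↔ σ a = a := by
    intro a
    rw [hF, LinearMap.mem_ker, LinearMap.sub_apply, LinearMap.id_apply, sub_eq_zero, hτ]
    exact ⟨fun h => h, fun h => h⟩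
  -- the quotient is finite free
  haveI : NoZeroSMulDivisors ℤ (Q ⧸ F) := by
    constructor
    intro n x h
    by_cases hn : n = 0
    · exact Or.inl hn
    · right
      obtain ⟨α, rfl⟩ := F.mkQ_surjective x
      rw [← map_smul, ← LinearMap.mem_ker, Submodule.ker_mkQ, hmemF] at h
      have h2 : n • (σ α - α) = 0 := by
        have hσ : σ (n • α) = n • σ α := by
          have := map_intCast_smul σ.toAddMonoidHom ℤ ℤ n α
          simpa using this
        rw [smul_sub, ← hσ, h, sub_self]
      have h3 : σ α - α = 0 := by
        rcases smul_eq_zero.mp h2 with h' | h'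
        · exact absurd h' hn
        · exact h'
      rw [← LinearMap.mem_ker, Submodule.ker_mkQ, hmemF]
      exact sub_eq_zero.mp h3
  haveI : Module.Finite ℤ (Q ⧸ F) := Module.Finite.quotient ℤ F
  haveI : Module.Free ℤ (Q ⧸ F) := Module.free_of_finite_type_torsion_free'
  -- a splitting of the quotient map
  obtain ⟨s, hs⟩ := F.mkQ.exists_rightInverse_of_surjective
    (LinearMap.range_eq_top.mpr F.mkQ_surjective)
  have hsec : ∀ u : Q ⧸ F, F.mkQ (s u) = u := by
    intro u
    have := LinearMap.ext_iff.mp hs u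
    simpa using this
  -- quadratic refinement on the quotient
  obtain ⟨t, ht0, ht⟩ := quad_refine (fun u v => f (s u) (s v))
    (fun u v w => by rw [map_add, f1])
    (fun u v w => by rw [map_add, f2])
    (fun u => fd _)
  clear_value f
  -- the desired function
  refine ⟨fun α => t (F.mkQ α) * f (α - s (F.mkQ α)) (s (F.mkQ α)), ?_, ?_⟩
  · intro α β
    set a : Q := α - s (F.mkQ α) with hadef
    set x : Q := s (F.mkQ α) with hxdef
    set bb : Q := β - s (F.mkQ β) with hbdef
    set y : Q := s (F.mkQ β) with hydef
    clear_value a x bb y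
    have hax : α = a + x := by rw [hadef, hxdef]; abel
    have hby : β = bb + y := by rw [hbdef, hydef]; abel
    have haF : σ a = a := by
      have : F.mkQ a = 0 := by rw [hadef, hxdef, map_sub, hsec, sub_self]
      rw [← hmemF, ← Submodule.ker_mkQ F, LinearMap.mem_ker]; exact this
    have hbF : σ bb = bb := by
      have : F.mkQ bb = 0 := by rw [hbdef, hydef, map_sub, hsec, sub_self]
      rw [← hmemF, ← Submodule.ker_mkQ F, LinearMap.mem_ker]; exact this
    -- value at α + β
    have hsum1 : F.mkQ (α + β) = F.mkQ α + F.mkQ β := map_add _ _ _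
    have hsum2 : s (F.mkQ (α + β)) = x + y := by rw [hsum1, map_add, hxdef, hydef]
    have hsum3 : α + β - s (F.mkQ (α + β)) = a + bb := by
      rw [hsum2, hadef, hbdef, hxdef, hydef]; abel
    have key : t (F.mkQ (α + β)) * f (α + β - s (F.mkQ (α + β))) (s (F.mkQ (α + β)))
        = (t (F.mkQ α) * f a x) * (t (F.mkQ β) * f bb y) * f α β := by
      rw [hsum3, hsum2, hsum1, ht, ← hxdef, ← hydef]
      have hfab : f α β = f a bb * f a y * (f x bb * f x y) := by
        conv_lhs => rw [hax, hby]
        rw [f1, f2, f2]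
      rw [hfab, fF a bb haF hbF, one_mul, f1, f2, f2, fsym bb x]
      simp [mul_comm, mul_left_comm, mul_assoc]
    dsimp only
    rw [← hxdef, ← hydef, ← hadef, ← hbdef, key, ← hff α β]
    simp [mul_comm, mul_left_comm, mul_assoc, hcancel, Int.units_mul_self]
  · intro α hα
    have h0 : F.mkQ α = 0 := by
      rw [← LinearMap.mem_ker, Submodule.ker_mkQ, hmemF]; exact hα
    dsimp only
    rw [h0, ht0, one_mul, map_zero, sub_zero, fzero2]
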